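/- Let a, b, c be real numbers with c ≠ 0. For every n ∈ ℕ, the monic polynomial matrix Pₙ := Aₙ⁻¹·Qₙ satisfies Pₙ''·G₂ + Pₙ'·G₁ + Pₙ·G₀ = Λₙ(D₂)·Pₙ as matrices of polynomials, where Λₙ(D₂) = [[2+4/c², 0, -2a(n+1)/c],[0, 2+4/c², 0],[0, 0, -2n]]; that is, the monic orthogonal polynomials are eigenfunctions of D₂ with eigenvalue Λₙ(D₂). -/
import Mathlib


open Matrix Polynomial

/-- The monic Hermite polynomials for the weight e^{-x²}:
h₀ = 1, h_{n+1}(x) = x·hₙ(x) - (1/2)·hₙ'(x). -/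
noncomputable def h : ℕ → Polynomial ℝ
  | 0 => 1
  | n + 1 => X * h n - C (1 / 2 : ℝ) * derivative (h n)


lemma h_deriv_pair : ∀ n : ℕ, derivative (h n) = C (n : ℝ) * h (n - 1) ∧
    derivative (h (n + 1)) = C ((n : ℝ) + 1) * h n := by
  intro n
  induction n with
  | zero => constructor <;> simp [h]
  | succ n ih =>
    obtain ⟨ih1, ih2⟩ := ih
    refine ⟨by simpa using ih2, ?_⟩
    have hrec : h (n + 1) = X * h n - C ((n : ℝ) / 2) * h (n - 1) := by
      rw [show h (n + 1) = X * h n - C (1/2 : ℝ) * derivative (h n) from rfl, ih1,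
        ← mul_assoc, ← C_mul]
      ring_nf
    show derivative (h (n + 2)) = _
    rw [show h (n + 2) = X * h (n + 1) - C (1/2 : ℝ) * derivative (h (n+1)) from rfl]
    simp only [derivative_sub, derivative_mul, derivative_X, derivative_C_mul, ih1, ih2,
      derivative_C, one_mul, zero_mul]
    rw [hrec]
    apply Polynomial.funext
    intro x
    simp only [eval_add, eval_sub, eval_mul, eval_X, eval_C, eval_neg, eval_pow, eval_one,
      eval_zero]
    push_cast
    ring

lemma h_deriv (n : ℕ) : derivative (h n) = C (n : ℝ) * h (n - 1) := (h_deriv_pair n).1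

lemma h_rec (n : ℕ) : h (n + 1) = X * h n - C ((n : ℝ) / 2) * h (n - 1) := by
  rw [show h (n + 1) = X * h n - C (1/2 : ℝ) * derivative (h n) from rfl, h_deriv,
    ← mul_assoc, ← C_mul]
  ring_nf

/-- The sequence Qₙ of matrix orthogonal polynomials for W. -/
noncomputable def Qmat (a b c : ℝ) (n : ℕ) : Matrix (Fin 3) (Fin 3) (Polynomial ℝ) :=
  !![(h n).comp (X - C b),
     C a * (h (n + 1) - (h n).comp (X - C b) * X),
     0;
     -(C (a * Real.exp (-b ^ 2) * n / 2)) * (h (n - 1)).comp (X - C b),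
     C (a ^ 2 * Real.exp (-b ^ 2) * n / 2) * (h (n - 1)).comp (X - C b) * X
       + h n + C (c ^ 2 * n / 2) * h (n - 1) * X,
     -(C (c * n / 2)) * h (n - 1);
     0,
     C c * (h (n + 1) - h n * X),
     h n]

/-- The leading coefficient Aₙ of Qₙ. -/
noncomputable def Amat (a b c : ℝ) (n : ℕ) : Matrix (Fin 3) (Fin 3) ℝ :=
  !![1, a * b * n, 0;
     0, a ^ 2 * Real.exp (-b ^ 2) * n / 2 + 1 + c ^ 2 * n / 2, 0;
     0, 0, 1]

/-- Second-order (polynomial) coefficient of the operator D₂. -/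
noncomputable def G2p (a c : ℝ) : Matrix (Fin 3) (Fin 3) (Polynomial ℝ) :=
  !![0, C a * X, 0; 0, 1, 0; 0, C c * X, 0]

/-- First-order (polynomial) coefficient of the operator D₂. -/
noncomputable def G1p (a c : ℝ) : Matrix (Fin 3) (Fin 3) (Polynomial ℝ) :=
  !![0, C (2 * a), C (-2 * a / c) * X;
     0, 0, C (-2 / c);
     0, C (2 * c + 2 / c), -2 * X]

/-- Zeroth-order coefficient of the operator D₂. -/
noncomputable def G0p (a c : ℝ) : Matrix (Fin 3) (Fin 3) (Polynomial ℝ) :=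
  !![C (2 + 4 / c ^ 2), 0, C (-2 * a / c);
     0, C (2 + 4 / c ^ 2), 0;
     0, 0, 0]

/-- Eigenvalue matrix Λₙ(D₂). -/
noncomputable def Lambda2 (a c : ℝ) (n : ℕ) : Matrix (Fin 3) (Fin 3) ℝ :=
  !![2 + 4 / c ^ 2, 0, -2 * a * ((n : ℝ) + 1) / c;
     0, 2 + 4 / c ^ 2, 0;
     0, 0, -2 * (n : ℝ)]


set_option maxHeartbeats 1600000 in
lemma coreQ (a b c : ℝ) (hc : c ≠ 0) (n : ℕ) :
    (Qmat a b c n).map (fun p => derivative (derivative p)) * G2p a c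
      + (Qmat a b c n).map (fun p => derivative p) * G1p a c
      + Qmat a b c n * G0p a c
    = (Lambda2 a c n).map C * Qmat a b c n := by
  refine Matrix.ext fun i j => ?_
  fin_cases i <;> fin_cases j <;>
  · simp [Qmat, G2p, G1p, G0p, Lambda2, Matrix.mul_apply, Fin.sum_univ_three,
      h_deriv, Nat.add_sub_cancel, derivative_comp, mul_comp, C_comp, X_comp,
      sub_comp, add_comp, neg_comp]
    try simp only [h_rec n]
    try apply Polynomial.funext
    try intro x
    try simp [eval_comp]
    try push_cast
    try field_simp
    try ring

/-- Explicit inverse of Aₙ. -/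
noncomputable def Bmat (a b c : ℝ) (n : ℕ) : Matrix (Fin 3) (Fin 3) ℝ :=
  !![1, -(a * b * n) / (a ^ 2 * Real.exp (-b ^ 2) * n / 2 + 1 + c ^ 2 * n / 2), 0;
     0, 1 / (a ^ 2 * Real.exp (-b ^ 2) * n / 2 + 1 + c ^ 2 * n / 2), 0;
     0, 0, 1]

lemma dpos (a b c : ℝ) (n : ℕ) :
    (0:ℝ) < a ^ 2 * Real.exp (-b ^ 2) * n / 2 + 1 + c ^ 2 * n / 2 := by
  have h1 : (0:ℝ) ≤ a ^ 2 * Real.exp (-b ^ 2) * n / 2 := by positivity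
  have h2 : (0:ℝ) ≤ c ^ 2 * n / 2 := by positivity
  linarith

lemma hAB (a b c : ℝ) (n : ℕ) : Amat a b c n * Bmat a b c n = 1 := by
  have hd := (dpos a b c n).ne'
  ext i j
  fin_cases i <;> fin_cases j <;>
    simp [Amat, Bmat, Matrix.mul_apply, Fin.sum_univ_three, Matrix.one_apply,
      Matrix.vecHead, Matrix.vecTail] <;>
    · try field_simp
      try ring

lemma hBL (a b c : ℝ) (n : ℕ) : Bmat a b c n * Lambda2 a c n = Lambda2 a c n * Bmat a b c n := by
  ext i j
  fin_cases i <;> fin_cases j <;>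
    simp [Bmat, Lambda2, Matrix.mul_apply, Fin.sum_univ_three,
      Matrix.vecHead, Matrix.vecTail] <;>
    ring

/-- the monic orthogonal polynomials Pₙ = Aₙ⁻¹·Qₙ are eigenfunctions
of D₂: Pₙ''·G₂ + Pₙ'·G₁ + Pₙ·G₀ = Λₙ(D₂)·Pₙ. -/
theorem monic_eigenfunctions_D2 (a b c : ℝ) (hc : c ≠ 0) (n : ℕ) :
    (((Amat a b c n).map C)⁻¹ * Qmat a b c n).map (fun p => derivative (derivative p))
        * G2p a c
      + (((Amat a b c n).map C)⁻¹ * Qmat a b c n).map (fun p => derivative p) * G1p a c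
      + (((Amat a b c n).map C)⁻¹ * Qmat a b c n) * G0p a c
    = (Lambda2 a c n).map C * (((Amat a b c n).map C)⁻¹ * Qmat a b c n) := by
  set Q := Qmat a b c n with hQ
  have hNinv : ((Amat a b c n).map C)⁻¹ = (Bmat a b c n).map C := by
    apply Matrix.inv_eq_right_inv
    rw [← Matrix.map_mul, hAB, Matrix.map_one _ C_0 C_1]
  have hmapd : ∀ P : Matrix (Fin 3) (Fin 3) (Polynomial ℝ),
      (((Bmat a b c n).map C) * P).map (fun p => derivative p)
        = ((Bmat a b c n).map C) * P.map (fun p => derivative p) := by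
    intro P
    refine Matrix.ext fun i j => ?_
    simp [Matrix.mul_apply, Matrix.map_apply, derivative_sum]
  have hmapdd : ∀ P : Matrix (Fin 3) (Fin 3) (Polynomial ℝ),
      (((Bmat a b c n).map C) * P).map (fun p => derivative (derivative p))
        = ((Bmat a b c n).map C) * P.map (fun p => derivative (derivative p)) := by
    intro P
    have e1 : ∀ M : Matrix (Fin 3) (Fin 3) (Polynomial ℝ),
        M.map (fun p => derivative (derivative p))
          = (M.map (fun p => derivative p)).map (fun p => derivative p) :=
      fun M => Matrix.ext fun i j => rfl
    rw [e1, e1, hmapd, hmapd]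
  have hcommC : ((Bmat a b c n).map C) * (Lambda2 a c n).map C
      = (Lambda2 a c n).map C * ((Bmat a b c n).map C) := by
    rw [← Matrix.map_mul, hBL, Matrix.map_mul]
  rw [hNinv, hmapd, hmapdd, Matrix.mul_assoc, Matrix.mul_assoc, Matrix.mul_assoc,
    ← Matrix.mul_add, ← Matrix.mul_add, coreQ a b c hc n, ← Matrix.mul_assoc, hcommC,
    Matrix.mul_assoc]
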